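/- Let κ be a regular uncountable cardinal. If principle C⁻(κ) holds, then principle D⁻(κ) holds. -/

import Mathlib

open Cardinal

/-- `C` is closed and unbounded (club) in the ordinal `o`. -/
def ClubIn (o : Ordinal) (C : Set Ordinal) : Prop :=
  C ⊆ Set.Iio o ∧ (∀ α < o, ∃ β ∈ C, α < β) ∧
    ∀ α < o, 0 < α → (∀ β < α, ∃ γ ∈ C, β < γ ∧ γ < α) → α ∈ C

/-- `S` is a stationary subset of the ordinal `o`: it meets every club subset of `o`. -/
def StationaryIn (o : Ordinal) (S : Set Ordinal) : Prop :=
  S ⊆ Set.Iio o ∧ ∀ C, ClubIn o C → (S ∩ C).Nonempty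

/-- `S` is a cofinal (unbounded) subset of the ordinal `o`. -/
def CofinalIn (o : Ordinal) (S : Set Ordinal) : Prop :=
  S ⊆ Set.Iio o ∧ ∀ α < o, ∃ β ∈ S, α < β

/-- For a matrix `A` of subsets of `ℕ`, a finite sequence `t ∈ ω^{<ω}` and
`s : {0,…,|t|-1} → Ordinal`, this is `A[s,t] = ⋂_{i<|t|} A(s i, t i)`. -/
def MatInt (A : Ordinal → ℕ → Set ℕ) (t : List ℕ) (s : Fin t.length → Ordinal) : Set ℕ :=
  ⋂ i, A (s i) (t.get i)

/-- Principle C⁻(κ). -/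
def PrincipleCminus (κ : Cardinal) : Prop :=
  ∀ (T : Set (List ℕ)) (A : Ordinal → ℕ → Set ℕ),
    (∃ S : Set Ordinal, CofinalIn κ.ord S ∧
      ∀ t ∈ T, ∀ s : Fin t.length → Ordinal, Function.Injective s →
        (∀ i, s i ∈ S) → (MatInt A t s).Nonempty) ∨
    (∃ t ∈ T, ∃ D : Fin t.length → Set Ordinal,
      (∀ i, CofinalIn κ.ord (D i)) ∧
      ∀ s : Fin t.length → Ordinal, Function.Injective s →
        (∀ i, s i ∈ D i) → MatInt A t s = ∅)

/-- A family of subsets of `ℕ` is centered if every finite subfamily has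
nonempty intersection. -/
def Centered (L : Set (Set ℕ)) : Prop :=
  ∀ F : Finset (Set ℕ), ↑F ⊆ L → (⋂₀ (F : Set (Set ℕ))).Nonempty

/-- The restriction of the matrix `A` to `S` is ω-adic. -/
def OmegaAdicOn (A : Ordinal → ℕ → Set ℕ) (S : Set Ordinal) : Prop :=
  ∀ (t : List ℕ) (s : Fin t.length → Ordinal), Function.Injective s →
    (∀ i, s i ∈ S) → (MatInt A t s).Nonempty

/-- `L(A)`: the sets `Y ⊆ ℕ` such that `{α < κ : ∃ n, A(α,n) ⊆ Y}` has cardinality `κ`. -/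
def Lcard (κ : Cardinal.{0}) (A : Ordinal.{0} → ℕ → Set ℕ) : Set (Set ℕ) :=
  {Y : Set ℕ | #{α : Ordinal | α < κ.ord ∧ ∃ n : ℕ, A α n ⊆ Y} = Cardinal.lift.{1,0} κ}

/-- Principle D⁻(κ). -/
def PrincipleDminus (κ : Cardinal.{0}) : Prop :=
  ∀ A : Ordinal.{0} → ℕ → Set ℕ, Centered (Lcard κ A) →
    ∃ S : Set Ordinal, CofinalIn κ.ord S ∧ OmegaAdicOn A S

lemma lift_cof_le_mk {o : Ordinal.{0}} {S : Set Ordinal.{0}} (hS : S ⊆ Set.Iio o)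
    (hu : ∀ α < o, ∃ β ∈ S, α < β) : Cardinal.lift.{1} o.cof ≤ #S := by
  classical
  let e := Ordinal.ToType.mk (o := o)
  set S' : Set o.ToType := {x | (↑(e.symm x) : Ordinal) ∈ S} with hS'
  have hub : Set.Unbounded (· < ·) S' := by
    intro x
    obtain ⟨β, hβS, hβ⟩ := hu (e.symm x) (e.symm x).2
    refine ⟨e ⟨β, hS hβS⟩, by simp [hS', hβS], ?_⟩
    intro hlt
    have : (⟨β, hS hβS⟩ : Set.Iio o) < e.symm x := by
      have := e.symm.strictMono hlt
      simpa using this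
    exact absurd hβ (not_lt.2 (le_of_lt this))
  have h1 : o.cof ≤ #S' := by
    rw [← Ordinal.cof_toType]
    exact Order.cof_le (fun x => let ⟨y, hy, h⟩ := hub x; ⟨y, hy, not_lt.1 h⟩)
  have h2 : #S = Cardinal.lift.{1} #S' := by
    have : S ≃ S' := by
      refine ⟨fun a => ⟨e ⟨a.1, hS a.2⟩, by simp [hS', a.2]⟩,
        fun b => ⟨(e.symm b.1 : Set.Iio o), b.2⟩, fun a => by simp, fun b => by simp⟩
    rw [← Cardinal.mk_uLift S']
    exact Cardinal.mk_congr (this.trans Equiv.ulift.symm)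
  rw [h2]
  exact Cardinal.lift_le.2 h1

lemma exists_strictMono_selector {o : Ordinal.{0}} (ho : 0 < o) :
    ∀ (k : ℕ) (W : Fin k → Set Ordinal.{0}),
      (∀ i, ∀ γ < o, ∃ α ∈ W i, γ < α ∧ α < o) →
      ∃ s : Fin k → Ordinal, StrictMono s ∧ ∀ i, s i ∈ W i ∧ s i < o := by
  intro k
  induction k with
  | zero =>
    intro W _
    exact ⟨fun i => i.elim0, fun i => i.elim0, fun i => i.elim0⟩
  | succ n ih =>
    intro W hW
    obtain ⟨s, hsm, hs⟩ := ih (fun i => W i.castSucc) (fun i => hW i.castSucc)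
    have hγ : ((Finset.univ : Finset (Fin n)).sup s) < o := by
      rw [Finset.sup_lt_iff (by simpa using ho)]
      exact fun i _ => (hs i).2
    obtain ⟨α, hαW, hαγ, hαo⟩ := hW (Fin.last n) _ hγ
    refine ⟨Fin.snoc s α, ?_, ?_⟩
    · intro i j hij
      rcases eq_or_ne j (Fin.last n) with rfl | hj
      · obtain ⟨i', rfl⟩ := Fin.exists_castSucc_eq.mpr (Fin.ne_last_of_lt hij)
        rw [Fin.snoc_castSucc, Fin.snoc_last]
        exact lt_of_le_of_lt (le_trans (Finset.le_sup (Finset.mem_univ i')) (le_refl _)) hαγ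
      · obtain ⟨j', rfl⟩ := Fin.exists_castSucc_eq.mpr hj
        obtain ⟨i', rfl⟩ := Fin.exists_castSucc_eq.mpr (Fin.ne_last_of_lt hij)
        rw [Fin.snoc_castSucc, Fin.snoc_castSucc]
        exact hsm (by exact_mod_cast hij)
    · intro i
      rcases eq_or_ne i (Fin.last n) with rfl | hi
      · rw [Fin.snoc_last]; exact ⟨hαW, hαo⟩
      · obtain ⟨i', rfl⟩ := Fin.exists_castSucc_eq.mpr hi
        rw [Fin.snoc_castSucc]
        exact hs i'


/-- If κ is a regular uncountable cardinal and C⁻(κ) holds, then D⁻(κ) holds. -/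
theorem statement_1 (κ : Cardinal.{0}) (hreg : κ.IsRegular) (hunc : ℵ₀ < κ)
    (hC : PrincipleCminus κ) : PrincipleDminus κ := by
  classical
  intro A hcent
  rcases hC Set.univ A with ⟨S, hS, h1⟩ | ⟨t, -, D, hD, hE⟩
  · exact ⟨S, hS, fun t s hinj hmem => h1 t trivial s hinj hmem⟩
  · exfalso
    set o := κ.ord with ho_def
    have holim : Order.IsSuccLimit o := Cardinal.isSuccLimit_ord hreg.1
    have ho : 0 < o := holim.pos
    have hcof : o.cof = κ := hreg.cof_eq
    -- the Y sets
    set Y : Fin t.length → Ordinal → Set ℕ :=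
      fun i β => ⋃ α ∈ {α | α ∈ D i ∧ β < α}, A α (t.get i) with hY_def
    have hY : ∀ i, ∀ β < o, Y i β ∈ Lcard κ A := by
      intro i β hβ
      set E : Set Ordinal := {α | α ∈ D i ∧ β < α} with hE_def
      have hEZ : E ⊆ {α : Ordinal | α < o ∧ ∃ n : ℕ, A α n ⊆ Y i β} := by
        intro α hα
        refine ⟨(hD i).1 hα.1, t.get i, ?_⟩
        show A α (t.get i) ⊆ ⋃ α ∈ E, A α (t.get i)
        exact Set.subset_biUnion_of_mem (u := fun α => A α (t.get i)) hα
      have hZsub : {α : Ordinal | α < o ∧ ∃ n : ℕ, A α n ⊆ Y i β} ⊆ Set.Iio o :=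
        fun α hα => hα.1
      have hEunb : ∀ γ < o, ∃ α ∈ E, γ < α := by
        intro γ hγ
        obtain ⟨α, hα, hγα⟩ := (hD i).2 (max β γ) (max_lt hβ hγ)
        exact ⟨α, ⟨hα, lt_of_le_of_lt (le_max_left _ _) hγα⟩,
          lt_of_le_of_lt (le_max_right _ _) hγα⟩
      have hlow : Cardinal.lift.{1} κ ≤ #{α : Ordinal | α < o ∧ ∃ n : ℕ, A α n ⊆ Y i β} := by
        have := lift_cof_le_mk (fun α hα => (hD i).1 hα.1 : E ⊆ Set.Iio o) hEunb
        rw [hcof] at this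
        exact this.trans (Cardinal.mk_le_mk_of_subset hEZ)
      have hhigh : #{α : Ordinal | α < o ∧ ∃ n : ℕ, A α n ⊆ Y i β} ≤ Cardinal.lift.{1} κ := by
        have := Cardinal.mk_le_mk_of_subset hZsub
        rwa [Ordinal.mk_Iio_ordinal, Cardinal.card_ord] at this
      exact le_antisymm hhigh hlow
    -- centeredness gives a common element
    have hm : ∀ β < o, ∃ m : ℕ, ∀ i, m ∈ Y i β := by
      intro β hβ
      have hsub : ↑(Finset.image (fun i => Y i β) Finset.univ) ⊆ Lcard κ A := by
        intro X hX
        simp only [Finset.coe_image, Set.mem_image, Finset.mem_coe, Finset.coe_univ,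
          Set.image_univ, Set.mem_range] at hX
        obtain ⟨i, rfl⟩ := hX
        exact hY i β hβ
      obtain ⟨m, hm⟩ := hcent _ hsub
      refine ⟨m, fun i => ?_⟩
      exact hm _ (by simp : Y i β ∈ (↑(Finset.image (fun i => Y i β) Finset.univ) : Set (Set ℕ)))
    have hm' : ∀ β : Ordinal, ∃ m : ℕ, β < o → ∀ i, m ∈ Y i β := by
      intro β
      by_cases h : β < o
      · obtain ⟨m, hm⟩ := hm β h
        exact ⟨m, fun _ => hm⟩
      · exact ⟨0, fun h' => absurd h' h⟩
    choose M hM using hm'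
    -- find a recurring value m₀
    have hB : ∃ m₀ : ℕ, ∀ γ < o, ∃ β, γ < β ∧ β < o ∧ M β = m₀ := by
      by_contra hcon
      push_neg at hcon
      choose g hg hg' using hcon
      have hsup : (⨆ m : ℕ, g m) < o := by
        apply Ordinal.iSup_lt_ord _ hg
        rw [hcof, Cardinal.mk_nat]
        exact hunc
      set β := (⨆ m : ℕ, g m) + 1 with hβ_def
      have hβo : β < o := holim.add_one_lt hsup
      have : g (M β) < β := lt_of_le_of_lt (Ordinal.le_iSup g (M β))
        (by rw [hβ_def]; exact Order.lt_succ _)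
      exact hg' (M β) β this hβo rfl
    obtain ⟨m₀, hB⟩ := hB
    -- the W sets are unbounded
    set W : Fin t.length → Set Ordinal :=
      fun i => {α | α ∈ D i ∧ m₀ ∈ A α (t.get i)} with hW_def
    have hWunb : ∀ i, ∀ γ < o, ∃ α ∈ W i, γ < α ∧ α < o := by
      intro i γ hγ
      obtain ⟨β, hγβ, hβo, hMβ⟩ := hB γ hγ
      have := hM β hβo i
      rw [hMβ] at this
      simp only [hY_def, Set.mem_iUnion, Set.mem_setOf_eq, exists_prop] at this
      obtain ⟨α, ⟨hαD, hβα⟩, hmem⟩ := this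
      exact ⟨α, ⟨hαD, hmem⟩, hγβ.trans hβα, (hD i).1 hαD⟩
    obtain ⟨s, hsm, hs⟩ := exists_strictMono_selector ho t.length W hWunb
    have hempty := hE s hsm.injective (fun i => (hs i).1.1)
    have : m₀ ∈ MatInt A t s := Set.mem_iInter.2 fun i => (hs i).1.2
    rw [hempty] at this
    exact this
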